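/- Let m > 1 be an integer and p ≡ 1 (mod m) a prime. Let f : [0,1] → ℝ be a function with Fourier coefficients (a_n)_{n∈ℤ} such that f(x) = ∑_{n=-∞}^{∞} a_n e^{2πinx} pointwise for all x ∈ (0,1), and suppose S(f) = ∑_{n≠0} |a_n| converges. Then |∑_{k ∈ R_m} f(k/p) − (1/m) ∑_{k=1}^{p-1} f(k/p)| ≤ (1 − 1/m) S(f) √p. -/

import Mathlib

open Complex Finset

lemma sum_units_eq {p : ℕ} [Fact p.Prime] (f : ZMod p → ℂ) :
    ∑ u : (ZMod p)ˣ, f u = (∑ x : ZMod p, f x) - f 0 := by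
  classical
  have h := Fintype.sum_equiv unitsEquivNeZero (fun u : (ZMod p)ˣ => f u)
    (fun x : {a : ZMod p // a ≠ 0} => f x) (fun u => rfl)
  rw [h]
  rw [← Finset.sum_subtype (Finset.univ.erase (0 : ZMod p))
    (by simp) (fun x : ZMod p => f x)]
  rw [eq_sub_iff_add_eq, Finset.sum_erase_add _ _ (Finset.mem_univ 0)]

lemma gauss_abs {p : ℕ} [Fact p.Prime] (χ : (ZMod p)ˣ → ℂ)
    (hmul : ∀ u v, χ (u * v) = χ u * χ v) (h1 : χ 1 = 1)
    (habs : ∀ u, ‖χ u‖ = 1)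
    (hsum : ∑ u, χ u = 0) {b : ZMod p} (hb : b ≠ 0) :
    ‖∑ u : (ZMod p)ˣ, χ u * ZMod.stdAddChar (b * (u : ZMod p))‖ = Real.sqrt p := by
  classical
  set ψ : AddChar (ZMod p) ℂ := ZMod.stdAddChar with hψ
  set g : ℂ := ∑ u : (ZMod p)ˣ, χ u * ψ (b * (u : ZMod p)) with hg
  have hχinv : ∀ u : (ZMod p)ˣ, χ u⁻¹ = (χ u)⁻¹ := fun u =>
    eq_inv_of_mul_eq_one_left (by rw [← hmul, inv_mul_cancel, h1])
  have hconjχ : ∀ u : (ZMod p)ˣ, (starRingEnd ℂ) (χ u) = χ u⁻¹ := fun u => by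
    rw [hχinv, Complex.inv_eq_conj (habs u)]
  have hrc : 0 < ringChar (ZMod p) := by
    rw [ZMod.ringChar_zmod_n]; exact (Fact.out : p.Prime).pos
  have hconjψ : ∀ x : ZMod p, (starRingEnd ℂ) (ψ x) = ψ (-x) := fun x => by
    rw [AddChar.starComp_apply hrc, AddChar.inv_apply]
  have inner : ∀ c : ZMod p, ∑ v : (ZMod p)ˣ, ψ (c * (v : ZMod p))
      = (if c = 0 then (p : ℂ) else 0) - 1 := by
    intro c
    rw [sum_units_eq (fun x => ψ (c * x))]
    have := AddChar.sum_mulShift (ψ := ψ) c (ZMod.isPrimitive_stdAddChar p)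
    simp_rw [mul_comm c _] at this ⊢
    rw [this]
    simp [ZMod.card]
  have key : g * (starRingEnd ℂ) g = (p : ℂ) := by
    rw [hg, map_sum, Finset.sum_mul_sum]
    have hterm : ∀ u v : (ZMod p)ˣ,
        χ u * ψ (b * (u : ZMod p)) * ((starRingEnd ℂ) (χ v * ψ (b * (v : ZMod p))))
        = χ (u * v⁻¹) * ψ ((b * ((u * v⁻¹ : (ZMod p)ˣ) - 1)) * (v : ZMod p)) := by
      intro u v
      rw [map_mul (starRingEnd ℂ), hconjχ, hconjψ, hmul]
      have : ψ (b * (u : ZMod p)) * ψ (-(b * (v : ZMod p)))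
          = ψ (b * (u : ZMod p) - b * (v : ZMod p)) := by
        rw [← AddChar.map_add_eq_mul]; ring_nf
      rw [mul_mul_mul_comm, this]
      congr 2
      push_cast
      field_simp
    simp_rw [hterm]
    rw [Finset.sum_comm]
    have hre : ∀ v : (ZMod p)ˣ, ∑ u : (ZMod p)ˣ,
        χ (u * v⁻¹) * ψ ((b * ((u * v⁻¹ : (ZMod p)ˣ) - 1)) * (v : ZMod p))
        = ∑ w : (ZMod p)ˣ, χ w * ψ ((b * ((w : ZMod p) - 1)) * (v : ZMod p)) := by
      intro v
      exact Equiv.sum_comp (Equiv.mulRight v⁻¹)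
        (fun w => χ w * ψ ((b * ((w : ZMod p) - 1)) * (v : ZMod p)))
    simp_rw [hre]
    rw [Finset.sum_comm]
    have hin : ∀ w : (ZMod p)ˣ, ∑ v : (ZMod p)ˣ,
        χ w * ψ ((b * ((w : ZMod p) - 1)) * (v : ZMod p))
        = χ w * ((if w = 1 then (p : ℂ) else 0) - 1) := by
      intro w
      rw [← Finset.mul_sum, inner]
      congr 2
      have : b * ((w : ZMod p) - 1) = 0 ↔ w = 1 := by
        rw [mul_eq_zero, sub_eq_zero]
        simp [hb, Units.val_eq_one]
      simp only [this]
    simp_rw [hin, mul_sub, mul_one]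
    rw [Finset.sum_sub_distrib, hsum, sub_zero]
    simp [mul_ite, h1]
  have hns : (Complex.normSq g : ℂ) = (p : ℂ) := by rw [← Complex.mul_conj]; exact key
  have h2 : Complex.normSq g = (p : ℝ) := by exact_mod_cast hns
  rw [Complex.norm_def, h2]

lemma castHom_eq_zero_iff {N m : ℕ} [NeZero N] [NeZero m] (hdvd : m ∣ N) (s : ZMod N) :
    ZMod.castHom hdvd (ZMod m) s = 0 ↔ ∃ y : ZMod N, m • y = s := by
  constructor
  · intro h
    have h1 : ((s.val : ℕ) : ZMod m) = 0 := by
      rwa [ZMod.natCast_val, ← ZMod.castHom_apply (h := hdvd)]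
    rw [ZMod.natCast_eq_zero_iff] at h1
    obtain ⟨c, hc⟩ := h1
    refine ⟨(c : ZMod N), ?_⟩
    have : ((m * c : ℕ) : ZMod N) = ((s.val : ℕ) : ZMod N) := by rw [← hc]
    rw [ZMod.natCast_val, ZMod.cast_id] at this
    rw [← this]
    push_cast
    rw [nsmul_eq_mul]
  · rintro ⟨y, rfl⟩
    rw [map_nsmul, nsmul_eq_mul, ZMod.natCast_self, zero_mul]

lemma sum_char_pow {N m : ℕ} [NeZero N] [NeZero m] (hdvd : m ∣ N) (s : ZMod N) :
    ∑ i : ZMod m, ZMod.stdAddChar (i * ZMod.castHom hdvd (ZMod m) s)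
      = if ∃ y : ZMod N, m • y = s then (m : ℂ) else 0 := by
  rw [AddChar.sum_mulShift _ (ZMod.isPrimitive_stdAddChar m)]
  rw [ZMod.card]
  simp only [castHom_eq_zero_iff hdvd]
  split_ifs <;> simp

lemma sum_char_units {N m : ℕ} [NeZero N] [NeZero m] (hdvd : m ∣ N) {i : ZMod m} (hi : i ≠ 0) :
    ∑ s : ZMod N, ZMod.stdAddChar (i * ZMod.castHom hdvd (ZMod m) s) = 0 := by
  have : ∑ s : ZMod N, ZMod.stdAddChar (i * ZMod.castHom hdvd (ZMod m) s)
      = ∑ s : ZMod N, (ZMod.stdAddChar.compAddMonoidHom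
          ((AddMonoidHom.mulLeft i).comp (ZMod.castHom hdvd (ZMod m)).toAddMonoidHom)) s := by
    apply Finset.sum_congr rfl
    intros; rfl
  rw [this]
  apply AddChar.sum_eq_zero_of_ne_one
  rw [AddChar.ne_one_iff]
  refine ⟨1, ?_⟩
  have : (ZMod.castHom hdvd (ZMod m)) (1 : ZMod N) = 1 := map_one _
  simp only [AddChar.compAddMonoidHom_apply, AddMonoidHom.coe_comp, RingHom.toAddMonoidHom_eq_coe,
    AddMonoidHom.coe_coe, Function.comp_apply, AddMonoidHom.coe_mulLeft, this, mul_one]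
  intro h
  apply hi
  have h0 : ZMod.stdAddChar (i : ZMod m) = ZMod.stdAddChar (0 : ZMod m) := by
    rw [h, AddChar.map_zero_eq_one]
  exact ZMod.injective_stdAddChar h0

lemma W_props {m p : ℕ} (hm : 1 < m) [Fact p.Prime] (hdvd : m ∣ Nat.card (ZMod p)ˣ) :
    (∑ u : (ZMod p)ˣ, ((if ∃ x : (ZMod p)ˣ, x ^ m = u then (1:ℂ) else 0) - 1/m)) = 0
    ∧ ∀ t : ZMod p, ‖∑ u : (ZMod p)ˣ,
        ((if ∃ x : (ZMod p)ˣ, x ^ m = u then (1:ℂ) else 0) - 1/m)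
          * ZMod.stdAddChar (t * (u : ZMod p))‖
        ≤ (1 - 1/(m:ℝ)) * Real.sqrt p := by
  classical
  have hm0 : (m : ℂ) ≠ 0 := Nat.cast_ne_zero.mpr (by omega)
  haveI : NeZero m := ⟨by omega⟩
  haveI : NeZero (Nat.card (ZMod p)ˣ) := ⟨Nat.card_pos.ne'⟩
  set N := Nat.card (ZMod p)ˣ with hN
  set e : Multiplicative (ZMod N) ≃* (ZMod p)ˣ := zmodCyclicMulEquiv inferInstance with he
  set pr : (ZMod p)ˣ → ZMod m :=
    fun u => ZMod.castHom hdvd (ZMod m) (Multiplicative.toAdd (e.symm u)) with hpr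
  set ξ : ZMod m → (ZMod p)ˣ → ℂ := fun i u => ZMod.stdAddChar (i * pr u) with hξ
  -- multiplicativity of pr
  have hpr_mul : ∀ u v, pr (u * v) = pr u + pr v := by
    intro u v
    simp only [hpr, map_mul, toAdd_mul, map_add]
  have hpr_one : pr 1 = 0 := by simp [hpr]
  -- indicator identity
  have hind : ∀ u : (ZMod p)ˣ, (if ∃ x : (ZMod p)ˣ, x ^ m = u then (m:ℂ) else 0)
      = ∑ i : ZMod m, ξ i u := by
    intro u
    rw [hξ]
    simp only [hpr]
    rw [sum_char_pow hdvd]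
    congr 1
    rw [eq_iff_iff]
    constructor
    · rintro ⟨x, rfl⟩
      refine ⟨Multiplicative.toAdd (e.symm x), ?_⟩
      rw [map_pow]
      simp [toAdd_pow]
    · rintro ⟨y, hy⟩
      refine ⟨e (Multiplicative.ofAdd y), ?_⟩
      apply e.symm.injective
      rw [map_pow, MulEquiv.symm_apply_apply, ← ofAdd_toAdd (e.symm u), ← hy, ofAdd_nsmul]
  -- sum over units of ξ i for i ≠ 0
  have hξsum : ∀ i : ZMod m, i ≠ 0 → ∑ u : (ZMod p)ˣ, ξ i u = 0 := by
    intro i hi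
    have h1 : ∑ u : (ZMod p)ˣ, ξ i u
        = ∑ z : Multiplicative (ZMod N), ξ i (e z) := (Equiv.sum_comp e.toEquiv (ξ i)).symm
    rw [h1]
    have h2 : ∀ z : Multiplicative (ZMod N), ξ i (e z)
        = ZMod.stdAddChar (i * ZMod.castHom hdvd (ZMod m) (Multiplicative.toAdd z)) := by
      intro z; simp [hξ, hpr]
    simp_rw [h2]
    rw [← Equiv.sum_comp (Multiplicative.ofAdd (α := ZMod N))
      (fun z => ZMod.stdAddChar (i * ZMod.castHom hdvd (ZMod m) (Multiplicative.toAdd z)))]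
    simp only [toAdd_ofAdd]
    exact sum_char_units hdvd hi
  have hξ1 : ∀ u, ξ 0 u = 1 := fun u => by simp [hξ]
  have hc : ∀ u : (ZMod p)ˣ, ((if ∃ x : (ZMod p)ˣ, x ^ m = u then (1:ℂ) else 0) - 1/m)
      = (1/m) * ∑ i ∈ Finset.univ.erase (0 : ZMod m), ξ i u := by
    intro u
    have h3 : ∑ i : ZMod m, ξ i u = ξ 0 u + ∑ i ∈ Finset.univ.erase (0 : ZMod m), ξ i u :=
      (Finset.add_sum_erase _ _ (Finset.mem_univ 0)).symm
    have h4 := hind u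
    rw [h3, hξ1] at h4
    have h5 : (if ∃ x : (ZMod p)ˣ, x ^ m = u then (1:ℂ) else 0)
        = (1/m) * (if ∃ x : (ZMod p)ˣ, x ^ m = u then (m:ℂ) else 0) := by
      split_ifs <;> field_simp
      simp
    rw [h5, h4]
    ring
  constructor
  · simp_rw [hc, ← Finset.mul_sum]
    rw [Finset.sum_comm]
    rw [Finset.sum_congr rfl (fun i hi => hξsum i (Finset.ne_of_mem_erase hi))]
    simp
  · intro t
    have hW : ∑ u : (ZMod p)ˣ, ((if ∃ x : (ZMod p)ˣ, x ^ m = u then (1:ℂ) else 0) - 1/m)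
          * ZMod.stdAddChar (t * (u : ZMod p))
        = (1/m) * ∑ i ∈ Finset.univ.erase (0 : ZMod m),
            ∑ u : (ZMod p)ˣ, ξ i u * ZMod.stdAddChar (t * (u : ZMod p)) := by
      simp_rw [hc, mul_assoc, ← Finset.mul_sum, Finset.sum_mul]
      rw [Finset.sum_comm]
    rw [hW]
    rcases eq_or_ne t 0 with rfl | ht
    · have : ∀ i ∈ Finset.univ.erase (0 : ZMod m),
          ∑ u : (ZMod p)ˣ, ξ i u * ZMod.stdAddChar ((0 : ZMod p) * (u : ZMod p)) = 0 := by
        intro i hi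
        simp only [zero_mul, AddChar.map_zero_eq_one, mul_one]
        exact hξsum i (Finset.ne_of_mem_erase hi)
      rw [Finset.sum_congr rfl this]
      simp only [Finset.sum_const_zero, mul_zero, map_zero, norm_zero]
      have h1m : (0:ℝ) ≤ 1 - 1/(m:ℝ) := by
        have : (1:ℝ) ≤ m := by exact_mod_cast hm.le
        have : 1/(m:ℝ) ≤ 1 := by
          rw [div_le_one (by linarith)]; linarith
        linarith
      positivity
    · have habsg : ∀ i ∈ Finset.univ.erase (0 : ZMod m),
          ‖∑ u : (ZMod p)ˣ, ξ i u * ZMod.stdAddChar (t * (u : ZMod p))‖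
            = Real.sqrt p := by
        intro i hi
        refine gauss_abs (ξ i) ?_ ?_ ?_ (hξsum i (Finset.ne_of_mem_erase hi)) ht
        · intro u v
          simp only [hξ, hpr_mul, mul_add]
          exact AddChar.map_add_eq_mul _ _ _
        · simp [hξ, hpr_one]
        · intro u
          simp only [hξ, ZMod.stdAddChar_apply]
          exact Circle.norm_coe _
      rw [norm_mul]
      have h6 : ‖(1:ℂ)/m‖ = 1/(m:ℝ) := by
        rw [norm_div, Complex.norm_natCast, norm_one]
      rw [h6]
      calc (1/(m:ℝ)) * ‖∑ i ∈ Finset.univ.erase (0 : ZMod m),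
            ∑ u : (ZMod p)ˣ, ξ i u * ZMod.stdAddChar (t * (u : ZMod p))‖
          ≤ (1/(m:ℝ)) * ∑ i ∈ Finset.univ.erase (0 : ZMod m),
            ‖∑ u : (ZMod p)ˣ, ξ i u * ZMod.stdAddChar (t * (u : ZMod p))‖ := by
            apply mul_le_mul_of_nonneg_left (norm_sum_le _ _)
            positivity
        _ = (1/(m:ℝ)) * ((m - 1 : ℕ) * Real.sqrt p) := by
            rw [Finset.sum_congr rfl habsg, Finset.sum_const, nsmul_eq_mul]
            congr 2
            rw [Finset.card_erase_of_mem (Finset.mem_univ 0), Finset.card_univ, ZMod.card]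
        _ = (1 - 1/(m:ℝ)) * Real.sqrt p := by
            have hmR : (m:ℝ) ≠ 0 := by positivity
            rw [Nat.cast_sub hm.le]
            push_cast
            field_simp

open scoped Classical in
-- bridge : sum over Icc 1 (p-1) equals sum over units
lemma bridge {m p : ℕ} [Fact p.Prime] (F : ZMod p → ℂ) :
    ∑ k ∈ Finset.Icc 1 (p - 1),
      ((if ∃ x : ZMod p, x ≠ 0 ∧ x ^ m = ((k : ℕ) : ZMod p) then (1:ℂ) else 0) - 1/m)
        * F ((k : ℕ) : ZMod p)
    = ∑ u : (ZMod p)ˣ,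
      ((if ∃ x : (ZMod p)ˣ, x ^ m = u then (1:ℂ) else 0) - 1/m) * F (u : ZMod p) := by
  classical
  have hp2 : 2 ≤ p := (Fact.out : p.Prime).two_le
  refine Finset.sum_nbij' (fun k => if h : (k : ZMod p) ≠ 0 then Units.mk0 _ h else 1)
    (fun u => (u : ZMod p).val) ?_ ?_ ?_ ?_ ?_
  · intro k hk
    exact Finset.mem_univ _
  · intro u hu
    simp only [Finset.mem_Icc]
    constructor
    · by_contra h
      have h0 : (u : ZMod p).val = 0 := by omega
      have : (u : ZMod p) = 0 := by
        have := ZMod.val_cast_of_lt (show (0:ℕ) < p by omega)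
        rw [← ZMod.val_eq_zero]; exact h0
      exact u.ne_zero this
    · have := ZMod.val_lt (u : ZMod p)
      omega
  · intro k hk
    simp only [Finset.mem_Icc] at hk
    have hklt : k < p := by omega
    have hne : ((k : ℕ) : ZMod p) ≠ 0 := by
      rw [Ne, ZMod.natCast_eq_zero_iff]
      intro hdvd
      have := Nat.le_of_dvd (by omega) hdvd
      omega
    beta_reduce
    rw [dif_pos hne]
    simp [ZMod.val_natCast_of_lt hklt]
  · intro u hu
    have hne : (((u : ZMod p).val : ℕ) : ZMod p) ≠ 0 := by
      rw [ZMod.natCast_val, ZMod.cast_id]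
      exact u.ne_zero
    beta_reduce
    rw [dif_pos hne]
    apply Units.ext
    simp [ZMod.natCast_val, ZMod.cast_id]
  · intro k hk
    simp only [Finset.mem_Icc] at hk
    have hklt : k < p := by omega
    have hne : ((k : ℕ) : ZMod p) ≠ 0 := by
      rw [Ne, ZMod.natCast_eq_zero_iff]
      intro hdvd
      have := Nat.le_of_dvd (by omega) hdvd
      omega
    beta_reduce
    rw [dif_pos hne]
    have hiff : (∃ x : ZMod p, x ≠ 0 ∧ x ^ m = ((k : ℕ) : ZMod p))
        ↔ (∃ x : (ZMod p)ˣ, x ^ m = Units.mk0 _ hne) := by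
      constructor
      · rintro ⟨x, hx0, hxm⟩
        refine ⟨Units.mk0 x hx0, ?_⟩
        apply Units.ext
        simpa using hxm
      · rintro ⟨x, hx⟩
        refine ⟨(x : ZMod p), x.ne_zero, ?_⟩
        have := congrArg (Units.val) hx
        simpa using this
    simp only [hiff, Units.val_mk0]


open scoped Classical in
/-- Let `m > 1` and `p ≡ 1 (mod m)` prime. If `f : [0,1] → ℝ` has a pointwise convergent
Fourier series `f(x) = ∑ aₙ e^{2πinx}` on `(0,1)` with `S(f) = ∑_{n≠0} |aₙ| < ∞`, then
`|∑_{k ∈ R_m} f(k/p) − (1/m) ∑_{k=1}^{p-1} f(k/p)| ≤ (1 − 1/m) S(f) √p`. -/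
theorem residue_sum_fourier_bound (m p : ℕ) (hm : 1 < m) (hp : p.Prime) (hpm : p % m = 1)
    (f : ℝ → ℝ) (a : ℤ → ℂ)
    (hf : ∀ x ∈ Set.Ioo (0 : ℝ) 1,
      (f x : ℂ) = ∑' n : ℤ, a n * Complex.exp (2 * Real.pi * Complex.I * (n : ℂ) * (x : ℂ)))
    (hS : Summable fun n : {n : ℤ // n ≠ 0} => ‖a n‖) :
    |(∑ k ∈ (Finset.Icc 1 (p - 1)).filter
          (fun k : ℕ => ∃ x : ZMod p, x ≠ 0 ∧ x ^ m = ((k : ℕ) : ZMod p)), f ((k : ℝ) / p))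
        - (1 / m) * ∑ k ∈ Finset.Icc 1 (p - 1), f ((k : ℝ) / p)|
      ≤ (1 - 1 / m) * (∑' n : {n : ℤ // n ≠ 0}, ‖a n‖) * Real.sqrt p := by
  classical
  haveI : Fact p.Prime := ⟨hp⟩
  have hp2 : 2 ≤ p := hp.two_le
  have hm0 : (0:ℝ) < m := by positivity
  have hpC : (p : ℂ) ≠ 0 := Nat.cast_ne_zero.mpr (by omega)
  have hdvd1 : m ∣ p - 1 := by
    have := Nat.div_add_mod p m
    exact ⟨p / m, by omega⟩
  have hcard : Nat.card (ZMod p)ˣ = p - 1 := by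
    simp [Nat.card_eq_fintype_card, ZMod.card_units_eq_totient, Nat.totient_prime hp]
  have hdvd : m ∣ Nat.card (ZMod p)ˣ := hcard ▸ hdvd1
  obtain ⟨hW0, hWbd⟩ := W_props hm hdvd
  set ψ : AddChar (ZMod p) ℂ := ZMod.stdAddChar with hψdef
  set C : ℝ := (1 - 1/(m:ℝ)) * Real.sqrt p with hC
  have h1m : (0:ℝ) ≤ 1 - 1/(m:ℝ) := by
    have : 1/(m:ℝ) ≤ 1 := by
      rw [div_le_one hm0]; exact_mod_cast hm.le
    linarith
  have hC0 : 0 ≤ C := mul_nonneg h1m (Real.sqrt_nonneg _)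
  set W : ZMod p → ℂ := fun t => ∑ u : (ZMod p)ˣ,
      ((if ∃ x : (ZMod p)ˣ, x ^ m = u then (1:ℂ) else 0) - 1/m) * ψ (t * (u : ZMod p))
    with hWdef
  have hWle : ∀ t, ‖W t‖ ≤ C := hWbd
  have hWzero : W 0 = 0 := by
    rw [hWdef]
    simp only [zero_mul, AddChar.map_zero_eq_one, mul_one]
    exact hW0
  set s : Finset ℕ := Finset.Icc 1 (p - 1) with hs
  set c : ℕ → ℂ := fun k =>
    (if ∃ x : ZMod p, x ≠ 0 ∧ x ^ m = ((k:ℕ) : ZMod p) then (1:ℂ) else 0) - 1/m with hc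
  -- Step R1: rewrite the real LHS
  have hreal : (∑ k ∈ s.filter
        (fun k : ℕ => ∃ x : ZMod p, x ≠ 0 ∧ x ^ m = ((k:ℕ) : ZMod p)), f ((k:ℝ)/p))
      - (1/(m:ℝ)) * ∑ k ∈ s, f ((k:ℝ)/p)
      = ∑ k ∈ s, ((if ∃ x : ZMod p, x ≠ 0 ∧ x ^ m = ((k:ℕ) : ZMod p) then (1:ℝ) else 0)
          - 1/(m:ℝ)) * f ((k:ℝ)/p) := by
    rw [Finset.sum_filter, Finset.mul_sum, ← Finset.sum_sub_distrib]
    apply Finset.sum_congr rfl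
    intro k _
    split_ifs <;> ring
  set D : ℂ := ∑ k ∈ s, c k * ((f ((k:ℝ)/p) : ℝ) : ℂ) with hD
  have hDreal : ((∑ k ∈ s, ((if ∃ x : ZMod p, x ≠ 0 ∧ x ^ m = ((k:ℕ) : ZMod p) then (1:ℝ) else 0)
      - 1/(m:ℝ)) * f ((k:ℝ)/p) : ℝ) : ℂ) = D := by
    rw [hD]
    push_cast [apply_ite]
    rfl
  -- Step R3: Fourier expansion at k/p
  have hfk : ∀ k ∈ s, ((f ((k:ℝ)/p) : ℝ) : ℂ)
      = ∑' n : ℤ, a n * ψ ((n : ZMod p) * ((k:ℕ) : ZMod p)) := by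
    intro k hk
    rw [hs, Finset.mem_Icc] at hk
    have hklt : k < p := by omega
    have hx : (k:ℝ)/p ∈ Set.Ioo (0:ℝ) 1 := by
      constructor
      · apply div_pos (by exact_mod_cast hk.1) (by positivity)
      · rw [div_lt_one (by positivity)]
        exact_mod_cast hklt
    rw [hf _ hx]
    apply tsum_congr
    intro n
    congr 1
    rw [show ((n : ZMod p) * ((k:ℕ) : ZMod p)) = (((n * (k:ℕ) : ℤ)) : ZMod p) by push_cast; ring]
    rw [hψdef, ZMod.stdAddChar_coe]
    congr 1
    push_cast
    field_simp
  -- equivs between the two subtypes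
  obtain ⟨e0, he0⟩ : ∃ e : {x : ℤ // x ∉ ({0} : Finset ℤ)} ≃ {n : ℤ // n ≠ 0},
      ∀ x, ((e x : ℤ)) = (x : ℤ) :=
    ⟨Equiv.subtypeEquivRight (by simp), fun x => rfl⟩
  have hS' : Summable (fun n : {x : ℤ // x ∉ ({0} : Finset ℤ)} => ‖a n‖) := by
    refine ((Equiv.summable_iff e0
      (f := fun n : {n : ℤ // n ≠ 0} => ‖a n‖)).mpr hS).congr (fun n => ?_)
    simp only [Function.comp_apply, he0]
  have habsψ : ∀ z : ZMod p, ‖ψ z‖ = 1 := by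
    intro z
    rw [hψdef, ZMod.stdAddChar_apply]
    exact Circle.norm_coe _
  have eq0 : ∀ b : ZMod p, Summable (fun n : ℤ => a n * ψ ((n : ZMod p) * b)) := by
    intro b
    rw [← Finset.summable_compl_iff ({0} : Finset ℤ)]
    apply Summable.of_norm
    apply Summable.congr hS'
    intro n
    rw [norm_mul, habsψ, mul_one]
  -- swap sums
  have hDW : D = ∑' n : ℤ, a n * W ((n : ℤ) : ZMod p) := by
    calc D = ∑ k ∈ s, ∑' n : ℤ, c k * (a n * ψ ((n : ZMod p) * ((k:ℕ) : ZMod p))) := by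
          apply Finset.sum_congr rfl
          intro k hk
          rw [hfk k hk, tsum_mul_left]
      _ = ∑' n : ℤ, ∑ k ∈ s, c k * (a n * ψ ((n : ZMod p) * ((k:ℕ) : ZMod p))) :=
          (Summable.tsum_finsetSum (fun k _ => (eq0 _).mul_left (c k))).symm
      _ = ∑' n : ℤ, a n * W ((n : ℤ) : ZMod p) := by
          apply tsum_congr
          intro n
          have h7 : ∑ k ∈ s, c k * (a n * ψ ((n : ZMod p) * ((k:ℕ) : ZMod p)))
              = a n * ∑ k ∈ s, c k * ψ ((n : ZMod p) * ((k:ℕ) : ZMod p)) := by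
            rw [Finset.mul_sum]
            apply Finset.sum_congr rfl
            intro k _
            ring
          rw [h7, hWdef]
          congr 1
          exact bridge (fun z => ψ ((n : ZMod p) * z))
  -- summability of the weighted sum
  have hA : Summable (fun n : ℤ => a n * W ((n : ℤ) : ZMod p)) := by
    rw [← Finset.summable_compl_iff ({0} : Finset ℤ)]
    apply Summable.of_norm_bounded (g := fun n : {x : ℤ // x ∉ ({0} : Finset ℤ)} =>
      ‖a n‖ * C) (hS'.mul_right C)
    intro n
    rw [norm_mul]
    exact mul_le_mul_of_nonneg_left (hWle _) (norm_nonneg _)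
  -- split off n = 0
  have hsplit : D = ∑' n : {x : ℤ // x ∉ ({0} : Finset ℤ)}, a n * W ((n : ℤ) : ZMod p) := by
    rw [hDW, ← Summable.sum_add_tsum_compl (s := ({0} : Finset ℤ)) hA]
    simp only [Finset.sum_singleton, Int.cast_zero, hWzero, mul_zero, zero_add]
    exact tsum_congr (fun x => rfl)
  have hnormsum : Summable (fun n : {x : ℤ // x ∉ ({0} : Finset ℤ)} =>
      ‖a n * W ((n : ℤ) : ZMod p)‖) := by
    apply Summable.of_nonneg_of_le (fun _ => norm_nonneg _)
      (fun n => ?_) (hS'.mul_right C)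
    rw [norm_mul]
    exact mul_le_mul_of_nonneg_left (hWle _) (norm_nonneg _)
  have hbound : ‖D‖ ≤ (∑' n : {n : ℤ // n ≠ 0}, ‖a n‖) * C := by
    rw [hsplit]
    calc ‖∑' n : {x : ℤ // x ∉ ({0} : Finset ℤ)}, a n * W ((n : ℤ) : ZMod p)‖
        ≤ ∑' n : {x : ℤ // x ∉ ({0} : Finset ℤ)}, ‖a n * W ((n : ℤ) : ZMod p)‖ := by
          exact norm_tsum_le_tsum_norm hnormsum
      _ ≤ ∑' n : {x : ℤ // x ∉ ({0} : Finset ℤ)}, ‖a n‖ * C := by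
          apply Summable.tsum_le_tsum _ hnormsum (hS'.mul_right C)
          intro n
          rw [norm_mul]
          exact mul_le_mul_of_nonneg_left (hWle _) (norm_nonneg _)
      _ = (∑' n : {x : ℤ // x ∉ ({0} : Finset ℤ)}, ‖a n‖) * C := tsum_mul_right
      _ = (∑' n : {n : ℤ // n ≠ 0}, ‖a n‖) * C := by
          congr 1
          refine Eq.trans ?_ (Equiv.tsum_eq e0 (fun n : {n : ℤ // n ≠ 0} => ‖a n‖))
          exact tsum_congr (fun x => by rw [he0])
  -- assemble
  have final : |(∑ k ∈ s.filter
        (fun k : ℕ => ∃ x : ZMod p, x ≠ 0 ∧ x ^ m = ((k:ℕ) : ZMod p)), f ((k:ℝ)/p))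
      - (1/(m:ℝ)) * ∑ k ∈ s, f ((k:ℝ)/p)|
      ≤ (1 - 1/(m:ℝ)) * (∑' n : {n : ℤ // n ≠ 0}, ‖a n‖) * Real.sqrt p := by
    rw [hreal, ← Real.norm_eq_abs, ← Complex.norm_real, hDreal]
    calc ‖D‖ ≤ (∑' n : {n : ℤ // n ≠ 0}, ‖a n‖) * C := hbound
      _ = (1 - 1/(m:ℝ)) * (∑' n : {n : ℤ // n ≠ 0}, ‖a n‖) * Real.sqrt p := by
          rw [hC]; ring
  have hinst := Finset.filter_congr_decidable (α := ℕ) s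
    (fun k : ℕ => ∃ x : ZMod p, x ≠ 0 ∧ x ^ m = ((k:ℕ) : ZMod p))
    (fun a => Classical.propDecidable _)
  rw [hinst]
  exact final
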